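/- Let H be a symmetric 4×4 complex Hadamard matrix in dephased form and let ρ ∈ ℂ be a non-real number with |ρ| = 1 such that H[j,j] = ρ/2 for some index j. Then the eigenvalues of H are 1, 1, −1, ρ; that is, the characteristic polynomial of H equals (X − 1)²·(X + 1)·(X − ρ). -/

import Mathlib

open Matrix Polynomial Complex

/-- A 4×4 complex Hadamard matrix: unitary with all entries of absolute value `1/√4`. -/
def IsHadamard (H : Matrix (Fin 4) (Fin 4) ℂ) : Prop :=
  H * Hᴴ = 1 ∧ Hᴴ * H = 1 ∧ ∀ i j, ‖H i j‖ = 1 / Real.sqrt 4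

/-- Dephased form: all entries of the 0th row and 0th column equal `1/√4`. -/
def IsDephased (H : Matrix (Fin 4) (Fin 4) ℂ) : Prop :=
  (∀ j, H 0 j = ((1 / Real.sqrt 4 : ℝ) : ℂ)) ∧ (∀ i, H i 0 = ((1 / Real.sqrt 4 : ℝ) : ℂ))

private lemma key' (a b c : ℂ) (ha : a * (starRingEnd ℂ) a = 1/4) (hb : b * (starRingEnd ℂ) b = 1/4)
    (hc : c * (starRingEnd ℂ) c = 1/4) (h : a + b + c = -(1/2)) :
    (2*a+1)*(2*b+1)*(2*c+1) = 0 := by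
  have h' : (starRingEnd ℂ) a + (starRingEnd ℂ) b + (starRingEnd ℂ) c = -(1/2) := by
    have := congrArg (starRingEnd ℂ) h
    simpa [map_ofNat] using this
  linear_combination 2*h - 16*b*c*ha - 16*a*c*hb - 16*a*b*hc + 16*a*b*c*h'

set_option maxHeartbeats 2000000 in
private lemma det_fin_four' {R} [CommRing R] (A : Matrix (Fin 4) (Fin 4) R) :
    A.det =
      A 0 0 * (A 1 1 * (A 2 2 * A 3 3 - A 2 3 * A 3 2) - A 1 2 * (A 2 1 * A 3 3 - A 2 3 * A 3 1) +
          A 1 3 * (A 2 1 * A 3 2 - A 2 2 * A 3 1)) -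
      A 0 1 * (A 1 0 * (A 2 2 * A 3 3 - A 2 3 * A 3 2) - A 1 2 * (A 2 0 * A 3 3 - A 2 3 * A 3 0) +
          A 1 3 * (A 2 0 * A 3 2 - A 2 2 * A 3 0)) +
      A 0 2 * (A 1 0 * (A 2 1 * A 3 3 - A 2 3 * A 3 1) - A 1 1 * (A 2 0 * A 3 3 - A 2 3 * A 3 0) +
          A 1 3 * (A 2 0 * A 3 1 - A 2 1 * A 3 0)) -
      A 0 3 * (A 1 0 * (A 2 1 * A 3 2 - A 2 2 * A 3 1) - A 1 1 * (A 2 0 * A 3 2 - A 2 2 * A 3 0) +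
          A 1 2 * (A 2 0 * A 3 1 - A 2 1 * A 3 0)) := by
  simp [Matrix.det_succ_row_zero, Fin.sum_univ_succ, Fin.succAbove,
    show (Fin.succ 2 : Fin 4) = 3 from rfl, show ((2 : Fin 3).castSucc : Fin 4) = 2 from rfl]
  ring

set_option maxHeartbeats 1000000 in
private lemma cpA (ρ : ℂ) (H : Matrix (Fin 4) (Fin 4) ℂ)
    (e00 : H 0 0 = 1/2) (e01 : H 0 1 = 1/2) (e02 : H 0 2 = 1/2) (e03 : H 0 3 = 1/2)
    (e10 : H 1 0 = 1/2) (e11 : H 1 1 = ρ/2) (e12 : H 1 2 = -(ρ/2)) (e13 : H 1 3 = -(1/2))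
    (e20 : H 2 0 = 1/2) (e21 : H 2 1 = -(ρ/2)) (e22 : H 2 2 = ρ/2) (e23 : H 2 3 = -(1/2))
    (e30 : H 3 0 = 1/2) (e31 : H 3 1 = -(1/2)) (e32 : H 3 2 = -(1/2)) (e33 : H 3 3 = 1/2) :
    H.charpoly = (X - 1) ^ 2 * (X + 1) * (X - C ρ) := by
  apply Polynomial.funext
  intro x
  rw [Matrix.charpoly, det_fin_four']
  simp only [charmatrix_apply, Matrix.diagonal_apply, Matrix.of_apply, if_true, if_false,
    show ((0:Fin 4) = 1) = False by simp, show ((0:Fin 4) = 2) = False by simp,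
    show ((0:Fin 4) = 3) = False by simp, show ((1:Fin 4) = 0) = False by simp,
    show ((1:Fin 4) = 2) = False by simp, show ((1:Fin 4) = 3) = False by simp,
    show ((2:Fin 4) = 0) = False by simp, show ((2:Fin 4) = 1) = False by simp,
    show ((2:Fin 4) = 3) = False by simp, show ((3:Fin 4) = 0) = False by simp,
    show ((3:Fin 4) = 1) = False by simp, show ((3:Fin 4) = 2) = False by simp,
    eq_self_iff_true, if_true, if_false,
    e00, e01, e02, e03, e10, e11, e12, e13, e20, e21, e22, e23, e30, e31, e32, e33]
  simp only [eval_mul, eval_add, eval_sub, eval_neg, eval_pow, eval_one, eval_X, eval_C, eval_zero]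
  ring

set_option maxHeartbeats 1000000 in
private lemma cpB (ρ : ℂ) (H : Matrix (Fin 4) (Fin 4) ℂ)
    (e00 : H 0 0 = 1/2) (e01 : H 0 1 = 1/2) (e02 : H 0 2 = 1/2) (e03 : H 0 3 = 1/2)
    (e10 : H 1 0 = 1/2) (e11 : H 1 1 = ρ/2) (e12 : H 1 2 = -(1/2)) (e13 : H 1 3 = -(ρ/2))
    (e20 : H 2 0 = 1/2) (e21 : H 2 1 = -(1/2)) (e22 : H 2 2 = 1/2) (e23 : H 2 3 = -(1/2))
    (e30 : H 3 0 = 1/2) (e31 : H 3 1 = -(ρ/2)) (e32 : H 3 2 = -(1/2)) (e33 : H 3 3 = ρ/2) :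
    H.charpoly = (X - 1) ^ 2 * (X + 1) * (X - C ρ) := by
  apply Polynomial.funext
  intro x
  rw [Matrix.charpoly, det_fin_four']
  simp only [charmatrix_apply, Matrix.diagonal_apply, Matrix.of_apply, if_true, if_false,
    show ((0:Fin 4) = 1) = False by simp, show ((0:Fin 4) = 2) = False by simp,
    show ((0:Fin 4) = 3) = False by simp, show ((1:Fin 4) = 0) = False by simp,
    show ((1:Fin 4) = 2) = False by simp, show ((1:Fin 4) = 3) = False by simp,
    show ((2:Fin 4) = 0) = False by simp, show ((2:Fin 4) = 1) = False by simp,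
    show ((2:Fin 4) = 3) = False by simp, show ((3:Fin 4) = 0) = False by simp,
    show ((3:Fin 4) = 1) = False by simp, show ((3:Fin 4) = 2) = False by simp,
    eq_self_iff_true, if_true, if_false,
    e00, e01, e02, e03, e10, e11, e12, e13, e20, e21, e22, e23, e30, e31, e32, e33]
  simp only [eval_mul, eval_add, eval_sub, eval_neg, eval_pow, eval_one, eval_X, eval_C, eval_zero]
  ring

set_option maxHeartbeats 1000000 in
private lemma cpC (ρ : ℂ) (H : Matrix (Fin 4) (Fin 4) ℂ)
    (e00 : H 0 0 = 1/2) (e01 : H 0 1 = 1/2) (e02 : H 0 2 = 1/2) (e03 : H 0 3 = 1/2)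
    (e10 : H 1 0 = 1/2) (e11 : H 1 1 = 1/2) (e12 : H 1 2 = -(1/2)) (e13 : H 1 3 = -(1/2))
    (e20 : H 2 0 = 1/2) (e21 : H 2 1 = -(1/2)) (e22 : H 2 2 = ρ/2) (e23 : H 2 3 = -(ρ/2))
    (e30 : H 3 0 = 1/2) (e31 : H 3 1 = -(1/2)) (e32 : H 3 2 = -(ρ/2)) (e33 : H 3 3 = ρ/2) :
    H.charpoly = (X - 1) ^ 2 * (X + 1) * (X - C ρ) := by
  apply Polynomial.funext
  intro x
  rw [Matrix.charpoly, det_fin_four']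
  simp only [charmatrix_apply, Matrix.diagonal_apply, Matrix.of_apply, if_true, if_false,
    show ((0:Fin 4) = 1) = False by simp, show ((0:Fin 4) = 2) = False by simp,
    show ((0:Fin 4) = 3) = False by simp, show ((1:Fin 4) = 0) = False by simp,
    show ((1:Fin 4) = 2) = False by simp, show ((1:Fin 4) = 3) = False by simp,
    show ((2:Fin 4) = 0) = False by simp, show ((2:Fin 4) = 1) = False by simp,
    show ((2:Fin 4) = 3) = False by simp, show ((3:Fin 4) = 0) = False by simp,
    show ((3:Fin 4) = 1) = False by simp, show ((3:Fin 4) = 2) = False by simp,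
    eq_self_iff_true, if_true, if_false,
    e00, e01, e02, e03, e10, e11, e12, e13, e20, e21, e22, e23, e30, e31, e32, e33]
  simp only [eval_mul, eval_add, eval_sub, eval_neg, eval_pow, eval_one, eval_X, eval_C, eval_zero]
  ring

theorem symmetric_hadamard_charpoly
    (H : Matrix (Fin 4) (Fin 4) ℂ)
    (hH : _root_.IsHadamard H) (hd : IsDephased H) (hsym : H = Hᵀ)
    (ρ : ℂ) (hρ : ρ.im ≠ 0) (habs : ‖ρ‖ = 1)
    (hdiag : ∃ j, H j j = ρ / 2) :
    H.charpoly = (X - 1) ^ 2 * (X + 1) * (X - C ρ) := by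
  obtain ⟨horth, -, hu⟩ := hH
  obtain ⟨hr0, hc0⟩ := hd
  have h4 : (Real.sqrt 4 : ℝ) = 2 := by
    rw [show (4:ℝ) = 2^2 by norm_num, Real.sqrt_sq (by norm_num : (0:ℝ) ≤ 2)]
  have hr0' : ∀ j, H 0 j = 1/2 := by intro j; rw [hr0 j, h4]; norm_num
  have hc0' : ∀ i, H i 0 = 1/2 := by intro i; rw [hc0 i, h4]; norm_num
  have h21 : H 2 1 = H 1 2 := Matrix.ext_iff.2 hsym 2 1
  have h31 : H 3 1 = H 1 3 := Matrix.ext_iff.2 hsym 3 1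
  have h32 : H 3 2 = H 2 3 := Matrix.ext_iff.2 hsym 3 2
  have hu' : ∀ i j, H i j * (starRingEnd ℂ) (H i j) = 1/4 := by
    intro i j
    rw [Complex.mul_conj, ← Complex.sq_norm, hu i j, h4]
    push_cast
    norm_num
  have E0 : ∀ i k : Fin 4, i ≠ k →
      H i 0 * (starRingEnd ℂ) (H k 0) + H i 1 * (starRingEnd ℂ) (H k 1) +
      H i 2 * (starRingEnd ℂ) (H k 2) + H i 3 * (starRingEnd ℂ) (H k 3) = 0 := by
    intro i k hik
    have h := Matrix.ext_iff.2 horth i k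
    rw [Matrix.mul_apply, Fin.sum_univ_four] at h
    simpa [Matrix.conjTranspose_apply, Matrix.one_apply, Complex.star_def, hik] using h
  -- ρ facts
  have hρρ : ρ * (starRingEnd ℂ) ρ = 1 := by
    rw [Complex.mul_conj, ← Complex.sq_norm, habs]; norm_num
  have hcne : (starRingEnd ℂ) ρ ≠ ρ := fun h => hρ (Complex.conj_eq_iff_im.1 h)
  have hρ1 : ρ ≠ 1 := by intro h; rw [h] at hρ; simp at hρ
  have hρm1 : ρ ≠ -1 := by intro h; rw [h] at hρ; simp at hρ
  have hq1 : (1:ℂ) - (starRingEnd ℂ) ρ ≠ 0 := by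
    intro h
    apply hρ1
    have h' : (starRingEnd ℂ) ρ = 1 := by linear_combination -h
    have := congrArg (starRingEnd ℂ) h'
    simpa using this
  -- row sums
  have S1 : H 1 1 + H 1 2 + H 1 3 = -(1/2) := by
    have h := E0 1 0 (by decide)
    simp only [hr0', hc0', map_div₀, _root_.map_one, map_ofNat] at h
    linear_combination 2*h
  have S2 : H 1 2 + H 2 2 + H 2 3 = -(1/2) := by
    have h := E0 2 0 (by decide)
    simp only [hr0', hc0', h21, map_div₀, _root_.map_one, map_ofNat] at h
    linear_combination 2*h
  have S3 : H 1 3 + H 2 3 + H 3 3 = -(1/2) := by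
    have h := E0 3 0 (by decide)
    simp only [hr0', hc0', h31, h32, map_div₀, _root_.map_one, map_ofNat] at h
    linear_combination 2*h
  obtain ⟨j, hj⟩ := hdiag
  fin_cases j
  · -- j = 0 : impossible
    have hj0 : H 0 0 = ρ/2 := hj
    exact absurd (by linear_combination 2*(hr0' 0) - 2*hj0 : ρ = 1) hρ1
  · -- j = 1
    have ha : H 1 1 = ρ/2 := hj
    rcases mul_eq_zero.1 (key' _ _ _ (hu' 1 1) (hu' 1 2) (hu' 1 3) S1) with h | hc3
    · rcases mul_eq_zero.1 h with h1 | h2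
      · exact absurd (by linear_combination h1 - 2*ha : ρ = -1) hρm1
      · -- H 1 2 = -(1/2)
        have hb : H 1 2 = -(1/2) := by linear_combination h2/2
        have hc : H 1 3 = -(ρ/2) := by linear_combination S1 - ha - hb
        rcases mul_eq_zero.1 (key' _ _ _ (hu' 1 3) (hu' 2 3) (hu' 3 3) S3) with h | hf2
        · rcases mul_eq_zero.1 h with h1 | h2
          · exact absurd (by linear_combination 2*hc - h1 : ρ = 1) hρ1
          · -- H 2 3 = -(1/2) : endpoint M_B
            have he : H 2 3 = -(1/2) := by linear_combination h2/2
            have hf : H 3 3 = ρ/2 := by linear_combination S3 - hc - he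
            have hd2 : H 2 2 = 1/2 := by linear_combination S2 - hb - he
            exact cpB ρ H (hr0' 0) (hr0' 1) (hr0' 2) (hr0' 3) (hc0' 1) ha hb hc
              (hc0' 2) (h21.trans hb) hd2 he (hc0' 3) (h31.trans hc) (h32.trans he) hf
        · -- H 3 3 = -(1/2) : contradiction
          have hf : H 3 3 = -(1/2) := by linear_combination hf2/2
          have he : H 2 3 = ρ/2 := by linear_combination S3 - hc - hf
          have hd2 : H 2 2 = -(ρ/2) := by linear_combination S2 - hb - he
          have P12 := E0 1 2 (by decide)
          simp only [hr0', hc0', h21, ha, hb, hc, hd2, he, map_div₀, _root_.map_one, map_ofNat,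
            map_neg] at P12
          exact absurd (by linear_combination 4*P12 + hρρ : (starRingEnd ℂ) ρ = ρ) hcne
    · -- H 1 3 = -(1/2)
      have hc : H 1 3 = -(1/2) := by linear_combination hc3/2
      have hb : H 1 2 = -(ρ/2) := by linear_combination S1 - ha - hc
      rcases mul_eq_zero.1 (key' _ _ _ (hu' 1 2) (hu' 2 2) (hu' 2 3) S2) with h | he2
      · rcases mul_eq_zero.1 h with h1 | h2
        · exact absurd (by linear_combination 2*hb - h1 : ρ = 1) hρ1
        · -- H 2 2 = -(1/2) : contradiction
          have hd2 : H 2 2 = -(1/2) := by linear_combination h2/2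
          have he : H 2 3 = ρ/2 := by linear_combination S2 - hb - hd2
          have hf : H 3 3 = -(ρ/2) := by linear_combination S3 - hc - he
          have P23 := E0 2 3 (by decide)
          simp only [hr0', hc0', h21, h31, h32, hb, hc, hd2, he, hf, map_div₀, _root_.map_one,
            map_ofNat, map_neg] at P23
          exact absurd (by linear_combination -4*P23 - hρρ : (starRingEnd ℂ) ρ = ρ) hcne
      · -- H 2 3 = -(1/2) : endpoint M_A
        have he : H 2 3 = -(1/2) := by linear_combination he2/2
        have hd2 : H 2 2 = ρ/2 := by linear_combination S2 - hb - he
        have hf : H 3 3 = 1/2 := by linear_combination S3 - hc - he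
        exact cpA ρ H (hr0' 0) (hr0' 1) (hr0' 2) (hr0' 3) (hc0' 1) ha hb hc
          (hc0' 2) (h21.trans hb) hd2 he (hc0' 3) (h31.trans hc) (h32.trans he) hf
  · -- j = 2
    have hd2 : H 2 2 = ρ/2 := hj
    rcases mul_eq_zero.1 (key' _ _ _ (hu' 1 2) (hu' 2 2) (hu' 2 3) S2) with h | he2
    · rcases mul_eq_zero.1 h with h1 | h2
      · -- H 1 2 = -(1/2) : endpoint M_C
        have hb : H 1 2 = -(1/2) := by linear_combination h1/2
        have he : H 2 3 = -(ρ/2) := by linear_combination S2 - hb - hd2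
        have hca : H 1 3 = -(H 1 1) := by linear_combination S1 - hb
        have P12 := E0 1 2 (by decide)
        simp only [hr0', hc0', h21, hb, hd2, he, map_div₀, _root_.map_one, map_ofNat, map_neg] at P12
        have hkey : ((1:ℂ) - (starRingEnd ℂ) ρ) * (1/4 - H 1 1/2) = 0 := by
          linear_combination P12 + ((starRingEnd ℂ) ρ/2)*hca
        rcases mul_eq_zero.1 hkey with h | h
        · exact absurd h hq1
        · have ha : H 1 1 = 1/2 := by linear_combination -2*h
          have hc : H 1 3 = -(1/2) := by linear_combination hca - ha
          have hf : H 3 3 = ρ/2 := by linear_combination S3 - hc - he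
          exact cpC ρ H (hr0' 0) (hr0' 1) (hr0' 2) (hr0' 3) (hc0' 1) ha hb hc
            (hc0' 2) (h21.trans hb) hd2 he (hc0' 3) (h31.trans hc) (h32.trans he) hf
      · exact absurd (by linear_combination h2 - 2*hd2 : ρ = -1) hρm1
    · -- H 2 3 = -(1/2) : endpoint M_A
      have he : H 2 3 = -(1/2) := by linear_combination he2/2
      have hb : H 1 2 = -(ρ/2) := by linear_combination S2 - hd2 - he
      have P12 := E0 1 2 (by decide)
      simp only [hr0', hc0', h21, hb, hd2, he, map_div₀, _root_.map_one, map_ofNat, map_neg] at P12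
      have hkey : ((1:ℂ) - (starRingEnd ℂ) ρ) * (H 1 1 - ρ/2) = 0 := by
        linear_combination 2*P12 + S1 - hb + hρρ
      rcases mul_eq_zero.1 hkey with h | h
      · exact absurd h hq1
      · have ha : H 1 1 = ρ/2 := by linear_combination h
        have hc : H 1 3 = -(1/2) := by linear_combination S1 - ha - hb
        have hf : H 3 3 = 1/2 := by linear_combination S3 - hc - he
        exact cpA ρ H (hr0' 0) (hr0' 1) (hr0' 2) (hr0' 3) (hc0' 1) ha hb hc
          (hc0' 2) (h21.trans hb) hd2 he (hc0' 3) (h31.trans hc) (h32.trans he) hf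
  · -- j = 3
    have hf : H 3 3 = ρ/2 := hj
    rcases mul_eq_zero.1 (key' _ _ _ (hu' 1 3) (hu' 2 3) (hu' 3 3) S3) with h | hf2
    · rcases mul_eq_zero.1 h with h1 | h2
      · -- H 1 3 = -(1/2) : endpoint M_C
        have hc : H 1 3 = -(1/2) := by linear_combination h1/2
        have he : H 2 3 = -(ρ/2) := by linear_combination S3 - hc - hf
        have hba : H 1 2 = -(H 1 1) := by linear_combination S1 - hc
        have P13 := E0 1 3 (by decide)
        simp only [hr0', hc0', h31, h32, hc, he, hf, map_div₀, _root_.map_one, map_ofNat,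
          map_neg] at P13
        have hkey : ((1:ℂ) - (starRingEnd ℂ) ρ) * (1/4 - H 1 1/2) = 0 := by
          linear_combination P13 + ((starRingEnd ℂ) ρ/2)*hba
        rcases mul_eq_zero.1 hkey with h | h
        · exact absurd h hq1
        · have ha : H 1 1 = 1/2 := by linear_combination -2*h
          have hb : H 1 2 = -(1/2) := by linear_combination hba - ha
          have hd2 : H 2 2 = ρ/2 := by linear_combination S2 - hb - he
          exact cpC ρ H (hr0' 0) (hr0' 1) (hr0' 2) (hr0' 3) (hc0' 1) ha hb hc
            (hc0' 2) (h21.trans hb) hd2 he (hc0' 3) (h31.trans hc) (h32.trans he) hf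
      · -- H 2 3 = -(1/2) : endpoint M_B
        have he : H 2 3 = -(1/2) := by linear_combination h2/2
        have hc : H 1 3 = -(ρ/2) := by linear_combination S3 - he - hf
        have hdb : H 2 2 = -(H 1 2) := by linear_combination S2 - he
        have P23 := E0 2 3 (by decide)
        simp only [hr0', hc0', h21, h31, h32, hc, he, hf, map_div₀, _root_.map_one, map_ofNat,
          map_neg] at P23
        have hkey : ((1:ℂ) - (starRingEnd ℂ) ρ) * (1/4 + H 1 2/2) = 0 := by
          linear_combination P23 + hdb/2
        rcases mul_eq_zero.1 hkey with h | h
        · exact absurd h hq1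
        · have hb : H 1 2 = -(1/2) := by linear_combination 2*h
          have hd2 : H 2 2 = 1/2 := by linear_combination hdb - hb
          have ha : H 1 1 = ρ/2 := by linear_combination S1 - hb - hc
          exact cpB ρ H (hr0' 0) (hr0' 1) (hr0' 2) (hr0' 3) (hc0' 1) ha hb hc
            (hc0' 2) (h21.trans hb) hd2 he (hc0' 3) (h31.trans hc) (h32.trans he) hf
    · exact absurd (by linear_combination hf2 - 2*hf : ρ = -1) hρm1
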